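/- In the finite discounted MDP setting with positivity, the double reinforcement learning estimating function is doubly robust at the population level: for any functions q̂, μ̂ : 𝒮×𝒜 → ℝ, define D = E_{s∼p_e^{(1)}}[q̂(s, π^e)] + (1−γ)^{−1} E_{(s,a,r,s′)∼p_b}[μ̂(s,a)(r + γ q̂(s′, π^e) − q̂(s,a))], where q̂(s, π^e) = Σ_{a∈𝒜} π^e(a|s) q̂(s,a). If μ̂ = μ* or q̂ = q (the true Q-function under π^e), then D = J(γ). -/

import Mathlib

open Finset

/-- Finite discounted MDP with positivity. The double reinforcement
learning estimating function is doubly robust at the population level: with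
`D = E_{s∼p_e^{(1)}}[q̂(s,π^e)] + (1−γ)⁻¹ E_{p_b}[μ̂(s,a)(r + γ q̂(s',π^e) − q̂(s,a))]`,
if `μ̂ = μ*` or `q̂` is the true Q-function (the unique solution of the Bellman equation),
then `D = J(γ)`. -/
theorem mdp_drl_doubly_robust
    {S A R : Type} [Fintype S] [Fintype A] [Fintype R]
    (rval : R → ℝ) (γ : ℝ) (hγ0 : 0 ≤ γ) (hγ1 : γ < 1)
    (p : S → A → S × R → ℝ)
    (hp0 : ∀ s a sr, 0 ≤ p s a sr) (hpsum : ∀ s a, ∑ sr : S × R, p s a sr = 1)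
    (pie : S → A → ℝ) (hpie0 : ∀ s a, 0 ≤ pie s a) (hpie1 : ∀ s, ∑ a, pie s a = 1)
    (p1e : S → ℝ) (hp1e0 : ∀ s, 0 ≤ p1e s) (hp1e1 : ∑ s, p1e s = 1)
    (pb : S → ℝ) (hpb0 : ∀ s, 0 ≤ pb s) (hpb1 : ∑ s, pb s = 1)
    (pib : S → A → ℝ) (hpib0 : ∀ s a, 0 ≤ pib s a) (hpib1 : ∀ s, ∑ a, pib s a = 1)
    (pe : ℕ → S → ℝ)
    (hpe0 : ∀ s, pe 0 s = p1e s)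
    (hpeS : ∀ n s', pe (n + 1) s' = ∑ s, ∑ a, pe n s * pie s a * ∑ r : R, p s a (s', r))
    (pinf : S → ℝ) (hpinf : ∀ s, pinf s = (1 - γ) * ∑' n : ℕ, γ ^ n * pe n s)
    (J : ℝ)
    (hJ : J = ∑' n : ℕ, γ ^ n *
        ∑ s, ∑ a, ∑ sr : S × R, pe n s * pie s a * p s a sr * rval sr.2)
    (μ : S → A → ℝ) (hμ : ∀ s a, μ s a = pinf s * pie s a / (pb s * pib s a))
    (hpos : ∀ s a, 0 < pinf s * pie s a → 0 < pb s * pib s a)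
    (qhat μhat : S → A → ℝ)
    (D : ℝ)
    (hD : D = (∑ s, p1e s * ∑ a, pie s a * qhat s a)
        + (1 - γ)⁻¹ *
            ∑ s, ∑ a, ∑ sr : S × R, pb s * pib s a * p s a sr *
              (μhat s a *
                (rval sr.2 + γ * (∑ a', pie sr.1 a' * qhat sr.1 a') - qhat s a))) :
    ((∀ s a, μhat s a = μ s a) → D = J)
      ∧ ((∀ s a, qhat s a =
            ∑ sr : S × R, p s a sr *
              (rval sr.2 + γ * ∑ a', pie sr.1 a' * qhat sr.1 a')) → D = J) := by
  have hγ1' : (0:ℝ) < 1 - γ := by linarith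
  set v : S → ℝ := fun s => ∑ a, pie s a * qhat s a with hv
  set c : S → ℝ := fun s => ∑ a, pie s a * ∑ sr : S × R, p s a sr * rval sr.2 with hc
  -- pe is a probability distribution at every time
  have hpe_nonneg : ∀ n s, 0 ≤ pe n s := by
    intro n
    induction n with
    | zero => intro s; rw [hpe0]; exact hp1e0 s
    | succ n ih =>
      intro s'
      rw [hpeS]
      refine Finset.sum_nonneg fun s _ => Finset.sum_nonneg fun a _ => ?_
      exact mul_nonneg (mul_nonneg (ih s) (hpie0 s a))
        (Finset.sum_nonneg fun r _ => hp0 s a (s', r))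
  have hpe_sum : ∀ n, ∑ s, pe n s = 1 := by
    intro n
    induction n with
    | zero => simp only [hpe0]; exact hp1e1
    | succ n ih =>
      calc ∑ s', pe (n+1) s'
          = ∑ s', ∑ s, ∑ a, pe n s * pie s a * ∑ r : R, p s a (s', r) := by
            refine Finset.sum_congr rfl fun s' _ => hpeS n s'
        _ = ∑ s, ∑ a, pe n s * pie s a * ∑ s', ∑ r : R, p s a (s', r) := by
            rw [Finset.sum_comm]
            refine Finset.sum_congr rfl fun s _ => ?_
            rw [Finset.sum_comm]
            refine Finset.sum_congr rfl fun a _ => ?_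
            rw [← Finset.mul_sum]
        _ = ∑ s, ∑ a, pe n s * pie s a := by
            refine Finset.sum_congr rfl fun s _ => Finset.sum_congr rfl fun a _ => ?_
            rw [← Fintype.sum_prod_type, hpsum, mul_one]
        _ = 1 := by
            simp only [← Finset.mul_sum, hpie1, mul_one]; exact ih
  have hpe_le_one : ∀ n s, pe n s ≤ 1 := by
    intro n s
    have := Finset.single_le_sum (f := pe n) (fun i _ => hpe_nonneg n i) (Finset.mem_univ s)
    rw [hpe_sum n] at this; exact this
  -- summability facts
  have hgeom : Summable (fun n : ℕ => γ ^ n) := summable_geometric_of_lt_one hγ0 hγ1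
  have hsum1 : ∀ s, Summable (fun n : ℕ => γ ^ n * pe n s) := by
    intro s
    refine Summable.of_norm_bounded hgeom fun n => ?_
    rw [Real.norm_eq_abs, abs_mul, abs_of_nonneg (pow_nonneg hγ0 n),
      abs_of_nonneg (hpe_nonneg n s)]
    calc γ ^ n * pe n s ≤ γ ^ n * 1 :=
          mul_le_mul_of_nonneg_left (hpe_le_one n s) (pow_nonneg hγ0 n)
      _ = γ ^ n := mul_one _
  have hpinf0 : ∀ s, 0 ≤ pinf s := by
    intro s
    rw [hpinf]
    exact mul_nonneg (le_of_lt hγ1')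
      (tsum_nonneg fun n => mul_nonneg (pow_nonneg hγ0 n) (hpe_nonneg n s))
  -- J as a tsum over mean rewards
  set C : ℕ → ℝ := fun n => ∑ s, pe n s * c s with hC
  have hJc : J = ∑' n : ℕ, γ ^ n * C n := by
    rw [hJ]
    refine tsum_congr fun n => ?_
    congr 1
    refine Finset.sum_congr rfl fun s _ => ?_
    simp only [hc, Finset.mul_sum, ← mul_assoc]
  have hsumC : Summable (fun n : ℕ => γ ^ n * C n) := by
    refine Summable.of_norm_bounded (g := fun n => γ ^ n * ∑ s, |c s|)
      (hgeom.mul_right _) fun n => ?_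
    rw [Real.norm_eq_abs, abs_mul, abs_of_nonneg (pow_nonneg hγ0 n)]
    refine mul_le_mul_of_nonneg_left ?_ (pow_nonneg hγ0 n)
    calc |C n| ≤ ∑ s, |pe n s * c s| := Finset.abs_sum_le_sum_abs _ _
      _ ≤ ∑ s, |c s| := by
          refine Finset.sum_le_sum fun s _ => ?_
          rw [abs_mul, abs_of_nonneg (hpe_nonneg n s)]
          calc pe n s * |c s| ≤ 1 * |c s| :=
                mul_le_mul_of_nonneg_right (hpe_le_one n s) (abs_nonneg _)
            _ = |c s| := one_mul _
  have hsumF : ∀ f : S → ℝ, Summable (fun n : ℕ => γ ^ n * ∑ s, pe n s * f s) := by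
    intro f
    refine Summable.of_norm_bounded (g := fun n => γ ^ n * ∑ s, |f s|)
      (hgeom.mul_right _) fun n => ?_
    rw [Real.norm_eq_abs, abs_mul, abs_of_nonneg (pow_nonneg hγ0 n)]
    refine mul_le_mul_of_nonneg_left ?_ (pow_nonneg hγ0 n)
    calc |∑ s, pe n s * f s| ≤ ∑ s, |pe n s * f s| := Finset.abs_sum_le_sum_abs _ _
      _ ≤ ∑ s, |f s| := by
          refine Finset.sum_le_sum fun s _ => ?_
          rw [abs_mul, abs_of_nonneg (hpe_nonneg n s)]
          calc pe n s * |f s| ≤ 1 * |f s| :=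
                mul_le_mul_of_nonneg_right (hpe_le_one n s) (abs_nonneg _)
            _ = |f s| := one_mul _
  -- push-forward identity
  have hpush : ∀ (n : ℕ) (f : S → ℝ),
      ∑ s, ∑ a, pe n s * pie s a * ∑ sr : S × R, p s a sr * f sr.1
        = ∑ s', pe (n+1) s' * f s' := by
    intro n f
    calc ∑ s, ∑ a, pe n s * pie s a * ∑ sr : S × R, p s a sr * f sr.1
        = ∑ s, ∑ a, ∑ s', pe n s * pie s a * ((∑ r : R, p s a (s', r)) * f s') := by
          refine Finset.sum_congr rfl fun s _ => Finset.sum_congr rfl fun a _ => ?_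
          rw [Fintype.sum_prod_type, Finset.mul_sum]
          refine Finset.sum_congr rfl fun s' _ => ?_
          congr 1
          rw [Finset.sum_mul]
      _ = ∑ s, ∑ s', ∑ a, pe n s * pie s a * ((∑ r : R, p s a (s', r)) * f s') :=
          Finset.sum_congr rfl fun s _ => Finset.sum_comm
      _ = ∑ s', ∑ s, ∑ a, pe n s * pie s a * ((∑ r : R, p s a (s', r)) * f s') :=
          Finset.sum_comm
      _ = ∑ s', pe (n+1) s' * f s' := by
          refine Finset.sum_congr rfl fun s' _ => ?_
          rw [hpeS, Finset.sum_mul]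
          refine Finset.sum_congr rfl fun s _ => ?_
          rw [Finset.sum_mul]
          refine Finset.sum_congr rfl fun a _ => by ring
  -- swap identity for pinf
  have hswap1 : ∀ f : S → ℝ, ∑ s, pinf s * f s
      = (1 - γ) * ∑' n : ℕ, γ ^ n * ∑ s, pe n s * f s := by
    intro f
    have hsm : ∀ s : S, Summable (fun n : ℕ => (1 - γ) * (γ ^ n * (pe n s * f s))) := by
      intro s
      have he : (fun n : ℕ => (1 - γ) * (γ ^ n * (pe n s * f s)))
          = fun n : ℕ => (γ ^ n * pe n s) * ((1 - γ) * f s) := by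
        funext n; ring
      rw [he]; exact (hsum1 s).mul_right _
    calc ∑ s, pinf s * f s
        = ∑ s, ∑' n : ℕ, (1 - γ) * (γ ^ n * (pe n s * f s)) := by
          refine Finset.sum_congr rfl fun s _ => ?_
          rw [hpinf, mul_assoc, ← tsum_mul_right, ← tsum_mul_left]
          refine tsum_congr fun n => by ring
      _ = ∑' n : ℕ, ∑ s, (1 - γ) * (γ ^ n * (pe n s * f s)) := by
          exact (Summable.tsum_finsetSum fun s _ => hsm s).symm
      _ = (1 - γ) * ∑' n : ℕ, γ ^ n * ∑ s, pe n s * f s := by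
          rw [← tsum_mul_left]
          refine tsum_congr fun n => ?_
          simp only [Finset.mul_sum]
  constructor
  · -- μ̂ = μ* branch
    intro hμhat
    have hkey : ∀ s a, pb s * pib s a * μhat s a = pinf s * pie s a := by
      intro s a
      rw [hμhat, hμ]
      by_cases h : pb s * pib s a = 0
      · have h2 : pinf s * pie s a = 0 := by
          by_contra hne
          have hlt : 0 < pinf s * pie s a :=
            lt_of_le_of_ne (mul_nonneg (hpinf0 s) (hpie0 s a)) (Ne.symm hne)
          have := hpos s a hlt
          rw [h] at this; exact lt_irrefl 0 this
        simp [h, h2]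
      · rw [mul_div_assoc', mul_div_cancel_left₀ _ h]
    -- split the inner expectation
    have hsplit : ∀ {ι : Type} [Fintype ι] (F G H : ι → ℝ),
        ∑ i, (F i + γ * G i - H i) = (∑ i, F i) + γ * (∑ i, G i) - ∑ i, H i := by
      intro ι _ F G H
      rw [Finset.sum_sub_distrib, Finset.sum_add_distrib,
        ← Finset.mul_sum Finset.univ G γ]
    have hterm : ∀ s a, ∑ sr : S × R, pb s * pib s a * p s a sr *
        (μhat s a * (rval sr.2 + γ * (∑ a', pie sr.1 a' * qhat sr.1 a') - qhat s a))
        = pinf s * pie s a * (∑ sr : S × R, p s a sr * rval sr.2)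
          + γ * (pinf s * pie s a * ∑ sr : S × R, p s a sr * v sr.1)
          - pinf s * pie s a * qhat s a := by
      intro s a
      calc ∑ sr : S × R, pb s * pib s a * p s a sr *
            (μhat s a * (rval sr.2 + γ * (∑ a', pie sr.1 a' * qhat sr.1 a') - qhat s a))
          = ∑ sr : S × R, (pb s * pib s a * μhat s a * (p s a sr * rval sr.2)
              + γ * (pb s * pib s a * μhat s a * (p s a sr * v sr.1))
              - pb s * pib s a * μhat s a * (p s a sr * qhat s a)) := by
            refine Finset.sum_congr rfl fun sr _ => ?_
            simp only [hv]
            ring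
        _ = (∑ sr : S × R, pb s * pib s a * μhat s a * (p s a sr * rval sr.2))
              + γ * (∑ sr : S × R, pb s * pib s a * μhat s a * (p s a sr * v sr.1))
              - ∑ sr : S × R, pb s * pib s a * μhat s a * (p s a sr * qhat s a) :=
            hsplit _ _ _
        _ = pinf s * pie s a * (∑ sr : S × R, p s a sr * rval sr.2)
              + γ * (pinf s * pie s a * ∑ sr : S × R, p s a sr * v sr.1)
              - pinf s * pie s a * qhat s a := by
            rw [← Finset.mul_sum Finset.univ (fun sr : S × R => p s a sr * rval sr.2)
                  (pb s * pib s a * μhat s a),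
                ← Finset.mul_sum Finset.univ (fun sr : S × R => p s a sr * v sr.1)
                  (pb s * pib s a * μhat s a),
                ← Finset.mul_sum Finset.univ (fun sr : S × R => p s a sr * qhat s a)
                  (pb s * pib s a * μhat s a),
                ← Finset.sum_mul Finset.univ (p s a) (qhat s a),
                hpsum s a, one_mul, hkey s a]
    have hA : ∀ s, ∑ a, pinf s * pie s a * (∑ sr : S × R, p s a sr * rval sr.2)
        = pinf s * c s := by
      intro s
      calc ∑ a, pinf s * pie s a * (∑ sr : S × R, p s a sr * rval sr.2)
          = ∑ a, pinf s * (pie s a * ∑ sr : S × R, p s a sr * rval sr.2) :=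
            Finset.sum_congr rfl fun a _ => mul_assoc _ _ _
        _ = pinf s * c s := (Finset.mul_sum _ _ _).symm
    have hQ : ∀ s, ∑ a, pinf s * pie s a * qhat s a = pinf s * v s := by
      intro s
      calc ∑ a, pinf s * pie s a * qhat s a
          = ∑ a, pinf s * (pie s a * qhat s a) :=
            Finset.sum_congr rfl fun a _ => mul_assoc _ _ _
        _ = pinf s * v s := (Finset.mul_sum _ _ _).symm
    have hT : ∑ s, ∑ a, ∑ sr : S × R, pb s * pib s a * p s a sr *
        (μhat s a * (rval sr.2 + γ * (∑ a', pie sr.1 a' * qhat sr.1 a') - qhat s a))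
        = (∑ s, pinf s * c s)
          + γ * (∑ s, ∑ a, pinf s * pie s a * ∑ sr : S × R, p s a sr * v sr.1)
          - ∑ s, pinf s * v s := by
      calc ∑ s, ∑ a, ∑ sr : S × R, pb s * pib s a * p s a sr *
            (μhat s a * (rval sr.2 + γ * (∑ a', pie sr.1 a' * qhat sr.1 a') - qhat s a))
          = ∑ s, ∑ a, (pinf s * pie s a * (∑ sr : S × R, p s a sr * rval sr.2)
              + γ * (pinf s * pie s a * ∑ sr : S × R, p s a sr * v sr.1)
              - pinf s * pie s a * qhat s a) :=
            Finset.sum_congr rfl fun s _ => Finset.sum_congr rfl fun a _ => hterm s a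
        _ = ∑ s, ((∑ a, pinf s * pie s a * (∑ sr : S × R, p s a sr * rval sr.2))
              + γ * (∑ a, pinf s * pie s a * ∑ sr : S × R, p s a sr * v sr.1)
              - ∑ a, pinf s * pie s a * qhat s a) :=
            Finset.sum_congr rfl fun s _ => hsplit _ _ _
        _ = (∑ s, ∑ a, pinf s * pie s a * (∑ sr : S × R, p s a sr * rval sr.2))
              + γ * (∑ s, ∑ a, pinf s * pie s a * ∑ sr : S × R, p s a sr * v sr.1)
              - ∑ s, ∑ a, pinf s * pie s a * qhat s a :=
            hsplit _ _ _
        _ = (∑ s, pinf s * c s)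
              + γ * (∑ s, ∑ a, pinf s * pie s a * ∑ sr : S × R, p s a sr * v sr.1)
              - ∑ s, pinf s * v s := by
            rw [Finset.sum_congr rfl fun s _ => hA s,
              Finset.sum_congr rfl fun s _ => hQ s]
    -- the flow identity
    have hswap2 : ∀ f : S → ℝ,
        ∑ s, ∑ a, pinf s * pie s a * ∑ sr : S × R, p s a sr * f sr.1
          = (1 - γ) * ∑' n : ℕ, γ ^ n * ∑ s', pe (n+1) s' * f s' := by
      intro f
      calc ∑ s, ∑ a, pinf s * pie s a * ∑ sr : S × R, p s a sr * f sr.1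
          = ∑ s, pinf s * ∑ a, pie s a * ∑ sr : S × R, p s a sr * f sr.1 := by
            refine Finset.sum_congr rfl fun s _ => ?_
            rw [Finset.mul_sum Finset.univ
              (fun a => pie s a * ∑ sr : S × R, p s a sr * f sr.1) (pinf s)]
            exact Finset.sum_congr rfl fun a _ => mul_assoc _ _ _
        _ = (1 - γ) * ∑' n : ℕ, γ ^ n *
              ∑ s, pe n s * ∑ a, pie s a * ∑ sr : S × R, p s a sr * f sr.1 :=
            hswap1 _
        _ = (1 - γ) * ∑' n : ℕ, γ ^ n * ∑ s', pe (n+1) s' * f s' := by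
            congr 1
            refine tsum_congr fun n => ?_
            congr 1
            rw [← hpush n f]
            refine Finset.sum_congr rfl fun s _ => ?_
            rw [Finset.mul_sum Finset.univ
              (fun a => pie s a * ∑ sr : S × R, p s a sr * f sr.1) (pe n s)]
            exact Finset.sum_congr rfl fun a _ => (mul_assoc _ _ _).symm
    have hVsum : Summable (fun n : ℕ => γ ^ n * ∑ s, pe n s * v s) := hsumF v
    have hshift : γ * ((1 - γ) * ∑' n : ℕ, γ ^ n * ∑ s', pe (n+1) s' * v s')
        = (∑ s, pinf s * v s) - (1 - γ) * ∑ s, p1e s * v s := by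
      have h0 : ∑' n : ℕ, γ ^ n * ∑ s, pe n s * v s
          = (∑ s, pe 0 s * v s) + ∑' n : ℕ, γ ^ (n+1) * ∑ s, pe (n+1) s * v s := by
        have h := Summable.tsum_eq_zero_add hVsum
        simpa using h
      have h1 : γ * ∑' n : ℕ, γ ^ n * ∑ s', pe (n+1) s' * v s'
          = ∑' n : ℕ, γ ^ (n+1) * ∑ s', pe (n+1) s' * v s' := by
        rw [← tsum_mul_left]
        exact tsum_congr fun n => by ring
      have h2 : ∑ s, pinf s * v s
          = (1 - γ) * ∑' n : ℕ, γ ^ n * ∑ s, pe n s * v s := hswap1 v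
      have h3 : ∑ s, pe 0 s * v s = ∑ s, p1e s * v s :=
        Finset.sum_congr rfl fun s _ => by rw [hpe0]
      calc γ * ((1 - γ) * ∑' n : ℕ, γ ^ n * ∑ s', pe (n+1) s' * v s')
          = (1 - γ) * (γ * ∑' n : ℕ, γ ^ n * ∑ s', pe (n+1) s' * v s') := by ring
        _ = (1 - γ) * ∑' n : ℕ, γ ^ (n+1) * ∑ s', pe (n+1) s' * v s' := by rw [h1]
        _ = (∑ s, pinf s * v s) - (1 - γ) * ∑ s, p1e s * v s := by
            rw [h2, h0, h3, mul_add]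
            ring
    have hE : ∑ s, pinf s * c s = (1 - γ) * J := by
      rw [hswap1 c, hJc]
    have hfirst : (∑ s, p1e s * ∑ a, pie s a * qhat s a) = ∑ s, p1e s * v s := rfl
    rw [hD, hT, hswap2 v, hshift, hE, hfirst]
    have hne : (1 - γ) ≠ 0 := ne_of_gt hγ1'
    field_simp
    ring
  · -- Bellman branch
    intro hq
    -- the correction term vanishes
    have hzero : ∀ s a, ∑ sr : S × R, pb s * pib s a * p s a sr *
        (μhat s a * (rval sr.2 + γ * (∑ a', pie sr.1 a' * qhat sr.1 a') - qhat s a)) = 0 := by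
      intro s a
      have h1 : ∑ sr : S × R, pb s * pib s a * p s a sr *
          (μhat s a * (rval sr.2 + γ * (∑ a', pie sr.1 a' * qhat sr.1 a') - qhat s a))
          = pb s * pib s a * μhat s a *
            ((∑ sr : S × R, p s a sr *
              (rval sr.2 + γ * ∑ a', pie sr.1 a' * qhat sr.1 a'))
              - qhat s a * ∑ sr : S × R, p s a sr) := by
        rw [mul_sub,
          Finset.mul_sum Finset.univ
            (fun sr : S × R => p s a sr *
              (rval sr.2 + γ * ∑ a', pie sr.1 a' * qhat sr.1 a'))
            (pb s * pib s a * μhat s a),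
          Finset.mul_sum Finset.univ (p s a) (qhat s a),
          Finset.mul_sum Finset.univ (fun sr : S × R => qhat s a * p s a sr)
            (pb s * pib s a * μhat s a),
          ← Finset.sum_sub_distrib]
        refine Finset.sum_congr rfl fun sr _ => by ring
      rw [h1, ← hq s a, hpsum, mul_one, sub_self, mul_zero]
    have hD' : D = ∑ s, p1e s * v s := by
      rw [hD]
      have h2 : ∀ s : S, ∑ a, ∑ sr : S × R, pb s * pib s a * p s a sr *
          (μhat s a * (rval sr.2 + γ * (∑ a', pie sr.1 a' * qhat sr.1 a') - qhat s a))
          = 0 := fun s => by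
        refine Finset.sum_eq_zero fun a _ => hzero s a
      simp only [h2, Finset.sum_const_zero, mul_zero, add_zero]
      rfl
    -- value recursion
    have hvrec : ∀ s, v s = c s + γ * ∑ a, pie s a * ∑ sr : S × R, p s a sr * v sr.1 := by
      intro s
      have h1 : ∀ a, pie s a * qhat s a
          = pie s a * (∑ sr : S × R, p s a sr * rval sr.2)
            + γ * (pie s a * ∑ sr : S × R, p s a sr * v sr.1) := by
        intro a
        rw [hq s a, Finset.mul_sum, Finset.mul_sum, Finset.mul_sum, Finset.mul_sum,
          ← Finset.sum_add_distrib]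
        refine Finset.sum_congr rfl fun sr _ => ?_
        simp only [hv]
        ring
      calc v s = ∑ a, pie s a * qhat s a := rfl
        _ = ∑ a, (pie s a * (∑ sr : S × R, p s a sr * rval sr.2)
              + γ * (pie s a * ∑ sr : S × R, p s a sr * v sr.1)) :=
            Finset.sum_congr rfl fun a _ => h1 a
        _ = c s + γ * ∑ a, pie s a * ∑ sr : S × R, p s a sr * v sr.1 := by
            rw [Finset.sum_add_distrib,
              ← Finset.mul_sum Finset.univ
                (fun a => pie s a * ∑ sr : S × R, p s a sr * v sr.1) γ]
    set V : ℕ → ℝ := fun n => ∑ s, pe n s * v s with hV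
    have hVrec : ∀ n, V n = C n + γ * V (n + 1) := by
      intro n
      calc V n = ∑ s, pe n s * v s := rfl
        _ = ∑ s, (pe n s * c s
              + γ * (pe n s * ∑ a, pie s a * ∑ sr : S × R, p s a sr * v sr.1)) := by
            refine Finset.sum_congr rfl fun s _ => ?_
            rw [hvrec s]; ring
        _ = C n + γ * ∑ s, pe n s * ∑ a, pie s a * ∑ sr : S × R, p s a sr * v sr.1 := by
            rw [Finset.sum_add_distrib,
              ← Finset.mul_sum Finset.univ
                (fun s => pe n s * ∑ a, pie s a * ∑ sr : S × R, p s a sr * v sr.1) γ]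
        _ = C n + γ * V (n + 1) := by
            congr 1
            congr 1
            simp only [hV]
            rw [← hpush n v]
            refine Finset.sum_congr rfl fun s _ => ?_
            rw [Finset.mul_sum]
            exact Finset.sum_congr rfl fun a _ => (mul_assoc _ _ _).symm
    have hpart : ∀ N : ℕ, ∑ k ∈ Finset.range N, γ ^ k * C k = V 0 - γ ^ N * V N := by
      intro N
      induction N with
      | zero => simp
      | succ N ih =>
        rw [Finset.sum_range_succ, ih, hVrec N]
        ring
    -- take limits
    have hlim1 : Filter.Tendsto (fun N => ∑ k ∈ Finset.range N, γ ^ k * C k)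
        Filter.atTop (nhds (∑' n : ℕ, γ ^ n * C n)) := hsumC.hasSum.tendsto_sum_nat
    have hlim2 : Filter.Tendsto (fun N : ℕ => γ ^ N * V N) Filter.atTop (nhds 0) := by
      refine squeeze_zero_norm (a := fun N => γ ^ N * ∑ s, |v s|) (fun N => ?_) ?_
      · rw [Real.norm_eq_abs, abs_mul, abs_of_nonneg (pow_nonneg hγ0 N)]
        refine mul_le_mul_of_nonneg_left ?_ (pow_nonneg hγ0 N)
        calc |V N| ≤ ∑ s, |pe N s * v s| := Finset.abs_sum_le_sum_abs _ _
          _ ≤ ∑ s, |v s| := by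
              refine Finset.sum_le_sum fun s _ => ?_
              rw [abs_mul, abs_of_nonneg (hpe_nonneg N s)]
              calc pe N s * |v s| ≤ 1 * |v s| :=
                    mul_le_mul_of_nonneg_right (hpe_le_one N s) (abs_nonneg _)
                _ = |v s| := one_mul _
      · have := (tendsto_pow_atTop_nhds_zero_of_lt_one hγ0 hγ1).mul_const (∑ s, |v s|)
        simpa using this
    have hlim3 : Filter.Tendsto (fun N : ℕ => ∑ k ∈ Finset.range N, γ ^ k * C k)
        Filter.atTop (nhds (V 0)) := by
      have : (fun N : ℕ => ∑ k ∈ Finset.range N, γ ^ k * C k)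
          = fun N : ℕ => V 0 - γ ^ N * V N := funext hpart
      rw [this]
      simpa using (tendsto_const_nhds (x := V 0)).sub hlim2
    have hJV : J = V 0 := by
      rw [hJc]
      exact tendsto_nhds_unique hlim1 hlim3
    rw [hD', hJV, hV]
    refine Finset.sum_congr rfl fun s _ => by rw [hpe0]
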